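/- Let T, S ∈ Im ℍ be purely imaginary quaternions with ‖T‖ = 1, let r, l ∈ ℝ with (r, l) ≠ (0, 0), and set T' = (2/(r² + l²))·(T × (l·(T × S) − r·S)), where p × q = (1/2)·(p·q − q·p) for purely imaginary p, q. Then ‖S + l·T'‖ = ‖S‖. (In the continuum limit this says that the Darboux transform η = γ + l·T of a curve γ with γ' = S satisfies |η'| = |γ'|.) -/
import Mathlib


open Quaternion

/-- The cross product of purely imaginary quaternions: `p × q = (1/2)(pq − qp)`. -/
noncomputable def qcross (p q : ℍ[ℝ]) : ℍ[ℝ] :=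
  (2 : ℝ)⁻¹ • (p * q - q * p)

theorem darboux_continuum_limit_preserves_speed
    (T S : ℍ[ℝ]) (hT : T.re = 0) (hS : S.re = 0) (hTnorm : ‖T‖ = 1)
    (r l : ℝ) (hrl : (r, l) ≠ (0, 0))
    (T' : ℍ[ℝ])
    (hT' : T' = (2 / (r ^ 2 + l ^ 2)) • qcross T (l • qcross T S - r • S)) :
    ‖S + l • T'‖ = ‖S‖ := by
  have hr2 : r ^ 2 + l ^ 2 ≠ 0 := by
    intro h
    have hr : r = 0 := by nlinarith [sq_nonneg r, sq_nonneg l]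
    have hl : l = 0 := by nlinarith [sq_nonneg r, sq_nonneg l]
    exact hrl (by simp [hr, hl])
  have hcpos : 0 < r ^ 2 + l ^ 2 := lt_of_le_of_ne (by positivity) (Ne.symm hr2)
  have hT2 : T * T = -1 := by
    have h1 : star T = -T := Quaternion.star_eq_neg.2 hT
    have h2 : T * star T = ((normSq T : ℝ) : ℍ[ℝ]) := Quaternion.self_mul_star T
    have h3 : normSq T = 1 := by
      rw [Quaternion.normSq_eq_norm_mul_self, hTnorm]; ring
    rw [h1, h3] at h2
    have h4 : -(T * T) = 1 := by simpa using h2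
    linear_combination (norm := noncomm_ring) -h4
  set c : ℝ := r ^ 2 + l ^ 2 with hc
  have hTS : T * (T * S) = -S := by linear_combination (norm := noncomm_ring) hT2 * S
  have hST : S * T * T = -S := by linear_combination (norm := noncomm_ring) S * hT2
  have hC : qcross T (l • qcross T S - r • S)
      = (-(l/2)) • (S + T * (S * T)) + (-(r/2)) • (T * S - S * T) := by
    simp only [qcross, smul_sub, mul_sub, sub_mul, smul_smul, mul_smul_comm, smul_mul_assoc,
      mul_assoc, hTS, hST]
    module
  have key : S + l • T' =
      (c⁻¹ : ℝ) • (((r : ℍ[ℝ]) - l • T) * (S * ((r : ℍ[ℝ]) + l • T))) := by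
    rw [hT', hC]
    have hrc : ((r : ℝ) : ℍ[ℝ]) = r • (1 : ℍ[ℝ]) := by
      rw [← Quaternion.coe_mul_eq_smul]; simp
    rw [hrc]
    simp only [smul_sub, smul_add, mul_sub, sub_mul, mul_add, add_mul, smul_smul,
      mul_smul_comm, smul_mul_assoc, one_mul, mul_one, mul_assoc, hTS, hST]
    match_scalars <;> field_simp <;> ring
  -- norms of the two factors
  have hstarA : star ((r : ℍ[ℝ]) - l • T) = (r : ℍ[ℝ]) + l • T := by
    have h1 : star T = -T := Quaternion.star_eq_neg.2 hT
    simp [h1, sub_eq_add_neg]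
  have hAA : ((r : ℍ[ℝ]) - l • T) * ((r : ℍ[ℝ]) + l • T) = ((c : ℝ) : ℍ[ℝ]) := by
    have hrc : ((r : ℝ) : ℍ[ℝ]) = r • (1 : ℍ[ℝ]) := by
      rw [← Quaternion.coe_mul_eq_smul]; simp
    have hcc : ((c : ℝ) : ℍ[ℝ]) = c • (1 : ℍ[ℝ]) := by
      rw [← Quaternion.coe_mul_eq_smul]; simp
    rw [hrc, hcc]
    simp only [mul_sub, sub_mul, mul_add, add_mul, smul_smul, mul_smul_comm, smul_mul_assoc,
      one_mul, mul_one, hT2, hc]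
    module
  have hnA : ‖(r : ℍ[ℝ]) - l • T‖ * ‖(r : ℍ[ℝ]) + l • T‖ = c := by
    have h1 : ‖((r : ℍ[ℝ]) - l • T) * ((r : ℍ[ℝ]) + l • T)‖ = ‖((c : ℝ) : ℍ[ℝ])‖ := by
      rw [hAA]
    rw [norm_mul] at h1
    have h2 : ‖((c : ℝ) : ℍ[ℝ])‖ = |c| := by simp [Quaternion.norm_coe]
    have h3 : ‖(r : ℍ[ℝ]) + l • T‖ = ‖(r : ℍ[ℝ]) - l • T‖ := by
      rw [← hstarA, norm_star]
    rw [h2, abs_of_pos hcpos] at h1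
    rw [h3, ← h1]
    rw [h3] at h1 ⊢
  rw [key, norm_smul, norm_mul, norm_mul]
  rw [show ‖(c⁻¹ : ℝ)‖ = c⁻¹ by rw [Real.norm_eq_abs, abs_of_pos (by positivity)]]
  calc c⁻¹ * (‖(r : ℍ[ℝ]) - l • T‖ * (‖S‖ * ‖(r : ℍ[ℝ]) + l • T‖))
      = c⁻¹ * (‖(r : ℍ[ℝ]) - l • T‖ * ‖(r : ℍ[ℝ]) + l • T‖) * ‖S‖ := by ring
    _ = ‖S‖ := by rw [hnA]; field_simp
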